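/- Let K ≥ 2 and ℓ ∈ (0,1]. Consider a sequence of arm pulls (a_t)_{t≥1} with a_t ∈ {1,…,K} and per-round costs C_t ∈ [ℓ,1]; let N_a(t) = Σ_{s≤t}1{a_s=a}, let ĉ_a(t) = (1/N_a(t))·Σ_{s≤t} C_s·1{a_s=a} be the empirical mean cost of arm a (arms are each pulled once in the first K rounds so N_a(t) ≥ 1 for t ≥ K), and let J(t) = Σ_{s≤t} C_s = Σ_a ĉ_a(t)N_a(t) be the cumulative cost. Let (ŵ*(t))_{t≥K} be a sequence in the simplex Σ_K and w* ∈ Σ_K, and suppose the sampling rule satisfies: for every t ≥ K, if U_t = {a : N_a(t) < √t} ≠ ∅ then a_{t+1} ∈ argmin_a N_a(t), and otherwise a_{t+1} ∈ argmax_a ( J(t)·ŵ*_a(t) − ĉ_a(t)·N_a(t) ). If ŵ*_a(t) → w*_a as t → ∞ for every a, then for every arm a, ĉ_a(t)·N_a(t)/J(t) → w*_a as t → ∞. (Deterministic content of Theorem 6: under the CTAS sampling rule, the empirical proportion of cumulative cost spent on each arm converges to the optimal proportion whenever the plug-in proportions converge.) -/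

import Mathlib

open Filter Finset

section CTASaux

variable {K : ℕ} (pull : ℕ → Fin K) (C : ℕ → ℝ)

/-- cost spent on arm `b` up to time `t` -/
noncomputable def ctasSp (b : Fin K) (t : ℕ) : ℝ :=
  ∑ s ∈ (Finset.Icc 1 t).filter fun s => pull s = b, C s

/-- total cost up to time `t` -/
noncomputable def ctasJ (t : ℕ) : ℝ := ∑ s ∈ Finset.Icc 1 t, C s

lemma ctasJ_succ (t : ℕ) : ctasJ C (t + 1) = ctasJ C t + C (t + 1) := by
  unfold ctasJ
  exact Finset.sum_Icc_succ_top (by omega) _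

lemma ctasSp_succ (b : Fin K) (t : ℕ) :
    ctasSp pull C b (t + 1) =
      ctasSp pull C b t + if pull (t + 1) = b then C (t + 1) else 0 := by
  unfold ctasSp
  have h : Finset.Icc 1 (t + 1) = insert (t + 1) (Finset.Icc 1 t) :=
    (Finset.insert_Icc_right_eq_Icc_add_one (by omega)).symm
  rw [h, Finset.filter_insert]
  split
  · rw [Finset.sum_insert (by simp)]
    ring
  · simp

lemma ctas_sum_Sp (t : ℕ) : ∑ b : Fin K, ctasSp pull C b t = ctasJ C t :=
  Finset.sum_fiberwise _ _ _

variable {ℓ : ℝ}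

lemma ctasSp_nonneg (hℓ : 0 < ℓ) (hC : ∀ t : ℕ, 1 ≤ t → C t ∈ Set.Icc ℓ 1)
    (b : Fin K) (t : ℕ) : 0 ≤ ctasSp pull C b t := by
  refine Finset.sum_nonneg fun s hs => ?_
  simp only [Finset.mem_filter, Finset.mem_Icc] at hs
  exact le_trans hℓ.le (hC s hs.1.1).1

lemma ctasSp_le_card (hC : ∀ t : ℕ, 1 ≤ t → C t ∈ Set.Icc ℓ 1) (b : Fin K) (t : ℕ) :
    ctasSp pull C b t ≤ (((Finset.Icc 1 t).filter fun s => pull s = b).card : ℝ) := by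
  have := Finset.sum_le_card_nsmul ((Finset.Icc 1 t).filter fun s => pull s = b) C 1
    (fun s hs => by
      simp only [Finset.mem_filter, Finset.mem_Icc] at hs
      exact (hC s hs.1.1).2)
  simpa [ctasSp] using this

lemma ctasJ_lb (hC : ∀ t : ℕ, 1 ≤ t → C t ∈ Set.Icc ℓ 1) (t : ℕ) :
    ℓ * t ≤ ctasJ C t := by
  have := Finset.card_nsmul_le_sum (Finset.Icc 1 t) C ℓ
    (fun s hs => by
      simp only [Finset.mem_Icc] at hs
      exact (hC s hs.1).1)
  rw [Nat.card_Icc] at this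
  simp only [Nat.add_sub_cancel, nsmul_eq_mul] at this
  unfold ctasJ
  linarith [this]

lemma ctasJ_mono (hℓ : 0 < ℓ) (hC : ∀ t : ℕ, 1 ≤ t → C t ∈ Set.Icc ℓ 1)
    {s t : ℕ} (h : s ≤ t) : ctasJ C s ≤ ctasJ C t := by
  induction t with
  | zero => simp_all
  | succ n ih =>
    rcases Nat.lt_or_ge s (n + 1) with h' | h'
    · have := ih (by omega)
      rw [ctasJ_succ]
      have := le_trans hℓ.le (hC (n + 1) (by omega)).1
      linarith
    · have : s = n + 1 := by omega
      simp [this]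

lemma ctasJ_pos (hℓ : 0 < ℓ) (hC : ∀ t : ℕ, 1 ≤ t → C t ∈ Set.Icc ℓ 1)
    {t : ℕ} (ht : 1 ≤ t) : 0 < ctasJ C t := by
  have h1 := ctasJ_lb C hC t
  have : (1 : ℝ) ≤ (t : ℝ) := by exact_mod_cast ht
  nlinarith

end CTASaux

section Key

variable {K : ℕ} {pull : ℕ → Fin K} {C : ℕ → ℝ} {ℓ : ℝ}

set_option maxHeartbeats 1000000 in
lemma ctas_key_upper
    (hK : 2 ≤ K) (hℓ0 : 0 < ℓ)
    (hC : ∀ t : ℕ, 1 ≤ t → C t ∈ Set.Icc ℓ 1)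
    (what : ℕ → Fin K → ℝ) (wstar : Fin K → ℝ)
    (hwhat : ∀ t : ℕ, K ≤ t → (∀ b, 0 ≤ what t b) ∧ ∑ b, what t b = 1)
    (hwstar : (∀ b, 0 ≤ wstar b) ∧ ∑ b, wstar b = 1)
    (hrule : ∀ t : ℕ, K ≤ t →
      ((∃ b : Fin K, ((((Finset.Icc 1 t).filter fun s => pull s = b).card : ℕ) : ℝ) < Real.sqrt t) →
        ∀ b : Fin K, ((Finset.Icc 1 t).filter fun s => pull s = pull (t + 1)).card ≤
          ((Finset.Icc 1 t).filter fun s => pull s = b).card) ∧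
      ((¬ ∃ b : Fin K, ((((Finset.Icc 1 t).filter fun s => pull s = b).card : ℕ) : ℝ) < Real.sqrt t) →
        ∀ b : Fin K, ctasJ C t * what t b - ctasSp pull C b t ≤
          ctasJ C t * what t (pull (t + 1)) - ctasSp pull C (pull (t + 1)) t))
    (hconv : ∀ b : Fin K, Tendsto (fun t => what t b) atTop (nhds (wstar b)))
    (b : Fin K) (ε : ℝ) (hε : 0 < ε) :
    ∀ᶠ t in atTop, ctasSp pull C b t ≤ ctasJ C t * (wstar b + ε) := by
  obtain ⟨hw0, hw1⟩ := hwstar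
  have hwb0 := hw0 b
  have hwb1 : wstar b ≤ 1 := by
    rw [← hw1]
    exact Finset.single_le_sum (fun i _ => hw0 i) (Finset.mem_univ b)
  -- eventual conditions
  have hc : (0:ℝ) < ε / 2 * ℓ := by positivity
  have hsqrt_ev : ∀ᶠ t : ℕ in atTop,
      Real.sqrt t ≤ ε / 2 * (ℓ * t) ∧ 1 ≤ ε / 2 * (ℓ * t) := by
    have hnat : ∀ᶠ t : ℕ in atTop,
        (1 / (ε / 2 * ℓ) ^ 2 : ℝ) ≤ t ∧ (1 / (ε / 2 * ℓ) : ℝ) ≤ t := by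
      filter_upwards [eventually_ge_atTop
        (max ⌈(1 / (ε / 2 * ℓ) ^ 2 : ℝ)⌉₊ ⌈(1 / (ε / 2 * ℓ) : ℝ)⌉₊)] with t ht
      exact ⟨le_trans (Nat.le_ceil _) (Nat.cast_le.mpr (le_trans (le_max_left _ _) ht)),
        le_trans (Nat.le_ceil _) (Nat.cast_le.mpr (le_trans (le_max_right _ _) ht))⟩
    filter_upwards [hnat] with t h
    obtain ⟨h1, h2⟩ := h
    have ht0 : (0:ℝ) ≤ t := Nat.cast_nonneg t
    have hc2 : (0:ℝ) < (ε / 2 * ℓ) ^ 2 := by positivity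
    have hct2 : 1 ≤ (t:ℝ) * (ε / 2 * ℓ) ^ 2 := by
      have := (div_le_iff₀ hc2).mp h1
      linarith
    have hct : 1 ≤ (t:ℝ) * (ε / 2 * ℓ) := by
      have := (div_le_iff₀ hc).mp h2
      linarith
    constructor
    · have h3 : (t:ℝ) ≤ (ε / 2 * ℓ * t) ^ 2 := by nlinarith
      calc Real.sqrt t ≤ Real.sqrt ((ε / 2 * ℓ * t) ^ 2) := Real.sqrt_le_sqrt h3
        _ = ε / 2 * ℓ * t := Real.sqrt_sq (by positivity)
        _ = ε / 2 * (ℓ * t) := by ring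
    · nlinarith
  have hdist_ev : ∀ᶠ t : ℕ in atTop, dist (what t b) (wstar b) < ε / 2 := by
    obtain ⟨N, hN⟩ := Metric.tendsto_atTop.mp (hconv b) (ε / 2) (by positivity)
    exact eventually_atTop.mpr ⟨N, hN⟩
  obtain ⟨T, hT⟩ := eventually_atTop.mp
    ((hsqrt_ev.and hdist_ev).and (eventually_ge_atTop K))
  -- at pull times, the spent cost is nearly proportional
  have hP : ∀ t, T ≤ t → pull (t + 1) = b →
      ctasSp pull C b t ≤ ctasJ C t * wstar b + ε / 2 * ctasJ C t := by
    intro t ht hp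
    obtain ⟨⟨⟨hsq, hone⟩, hdist⟩, htK⟩ := hT t ht
    obtain ⟨hforced, hgreedy⟩ := hrule t htK
    have hJl := ctasJ_lb C hC t
    have hJ0 : 0 ≤ ctasJ C t := le_trans (by positivity) hJl
    by_cases hex : ∃ b' : Fin K,
        ((((Finset.Icc 1 t).filter fun s => pull s = b').card : ℕ) : ℝ) < Real.sqrt t
    · obtain ⟨b', hb'⟩ := hex
      have h1 := hforced ⟨b', hb'⟩ b'
      simp only [hp] at h1
      have h2 : ctasSp pull C b t ≤ Real.sqrt t := by
        refine le_trans (ctasSp_le_card pull C hC b t) (le_trans ?_ hb'.le)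
        exact_mod_cast h1
      have hw : 0 ≤ ctasJ C t * wstar b := mul_nonneg hJ0 hwb0
      nlinarith
    · have hall : ∀ b' : Fin K, ctasJ C t * what t b' - ctasSp pull C b' t ≤
          ctasJ C t * what t b - ctasSp pull C b t := by
        intro b'
        have := hgreedy hex b'
        simpa only [hp] using this
      have hsum : ∑ b' : Fin K, (ctasJ C t * what t b' - ctasSp pull C b' t) = 0 := by
        rw [Finset.sum_sub_distrib, ← Finset.mul_sum, (hwhat t htK).2, ctas_sum_Sp, mul_one,
          sub_self]
      have hcard := Finset.sum_le_card_nsmul Finset.univ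
        (fun b' : Fin K => ctasJ C t * what t b' - ctasSp pull C b' t)
        (ctasJ C t * what t b - ctasSp pull C b t) (fun b' _ => hall b')
      rw [hsum, Finset.card_univ, Fintype.card_fin, nsmul_eq_mul] at hcard
      have hKpos : (0:ℝ) < (K : ℝ) := by
        have : (0:ℕ) < K := by omega
        exact_mod_cast this
      have hD0 : 0 ≤ ctasJ C t * what t b - ctasSp pull C b t := by nlinarith
      have hwd : what t b ≤ wstar b + ε / 2 := by
        have := abs_lt.mp (by rwa [Real.dist_eq] at hdist)
        linarith [this.2]
      nlinarith [mul_le_mul_of_nonneg_left hwd hJ0]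
  -- induction from T
  set A := ctasSp pull C b T - ctasJ C T * wstar b with hA
  have hind : ∀ t, T ≤ t →
      ctasSp pull C b t ≤ ctasJ C t * wstar b + max A (ε * ctasJ C t) := by
    intro t ht
    induction t, ht using Nat.le_induction with
    | base =>
      have := le_max_left A (ε * ctasJ C T)
      simp only [hA] at this ⊢
      linarith
    | succ n hn ih =>
      have hJs := ctasJ_succ C n
      have hCs := hC (n + 1) (by omega)
      have hJln := ctasJ_lb C hC n
      have hJn0 : 0 ≤ ctasJ C n := le_trans (by positivity) hJln
      have hJmono : ctasJ C n ≤ ctasJ C (n + 1) := by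
        have := hCs.1; linarith
      have hw_incr : ctasJ C n * wstar b ≤ ctasJ C (n + 1) * wstar b :=
        mul_le_mul_of_nonneg_right hJmono hwb0
      rw [ctasSp_succ]
      by_cases hp : pull (n + 1) = b
      · rw [if_pos hp]
        obtain ⟨⟨⟨hsq, hone⟩, _⟩, _⟩ := hT n hn
        have h1 := hP n hn hp
        have h3 : ε / 2 * (ℓ * n) ≤ ε / 2 * ctasJ C n := by nlinarith
        have h4 : ctasSp pull C b n + C (n + 1) ≤
            ctasJ C n * wstar b + ε * ctasJ C n := by
          have := hCs.2; linarith
        have h5 : ε * ctasJ C n ≤ ε * ctasJ C (n + 1) := by nlinarith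
        have := le_max_right A (ε * ctasJ C (n + 1))
        linarith
      · rw [if_neg hp, add_zero]
        rcases le_total A (ε * ctasJ C n) with h | h
        · rw [max_eq_right h] at ih
          have h5 : ε * ctasJ C n ≤ ε * ctasJ C (n + 1) := by nlinarith
          have := le_max_right A (ε * ctasJ C (n + 1))
          linarith
        · rw [max_eq_left h] at ih
          have := le_max_left A (ε * ctasJ C (n + 1))
          linarith
  -- conclude
  have hevA : ∀ᶠ t : ℕ in atTop, A ≤ ε * ctasJ C t := by
    filter_upwards [eventually_ge_atTop ⌈A / (ε * ℓ)⌉₊] with t ht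
    have h1 : A / (ε * ℓ) ≤ (t : ℝ) := le_trans (Nat.le_ceil _) (Nat.cast_le.mpr ht)
    have h2 : A ≤ (t:ℝ) * (ε * ℓ) := (div_le_iff₀ (by positivity)).mp h1
    have h3 := ctasJ_lb C hC t
    have h4 := mul_le_mul_of_nonneg_left h3 hε.le
    linarith
  filter_upwards [eventually_ge_atTop T, hevA] with t ht hAle
  have h1 := hind t ht
  have h2 : max A (ε * ctasJ C t) ≤ ε * ctasJ C t := max_le hAle le_rfl
  have : ctasJ C t * (wstar b + ε) = ctasJ C t * wstar b + ε * ctasJ C t := by ring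
  linarith

end Key

section Final

variable {K : ℕ} {pull : ℕ → Fin K} {C : ℕ → ℝ} {ℓ : ℝ}

set_option maxHeartbeats 1000000 in
lemma ctas_final
    (hK : 2 ≤ K) (hℓ0 : 0 < ℓ)
    (hC : ∀ t : ℕ, 1 ≤ t → C t ∈ Set.Icc ℓ 1)
    (wstar : Fin K → ℝ)
    (hwstar : (∀ b, 0 ≤ wstar b) ∧ ∑ b, wstar b = 1)
    (hupper : ∀ ε : ℝ, 0 < ε → ∀ b : Fin K,
      ∀ᶠ t in atTop, ctasSp pull C b t ≤ ctasJ C t * (wstar b + ε))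
    (b : Fin K) :
    Tendsto (fun t => ctasSp pull C b t / ctasJ C t) atTop (nhds (wstar b)) := by
  rw [Metric.tendsto_atTop]
  intro ε hε
  have hKpos : (0:ℝ) < (K:ℝ) := by exact_mod_cast (by omega : 0 < K)
  set δ := ε / (2 * K) with hδdef
  have hδ0 : 0 < δ := by positivity
  have hKδ : (K:ℝ) * δ = ε / 2 := by
    rw [hδdef]; field_simp
  have hev : ∀ᶠ t : ℕ in atTop, ∀ b' : Fin K,
      ctasSp pull C b' t ≤ ctasJ C t * (wstar b' + δ) :=
    eventually_all.mpr (fun b' => hupper δ hδ0 b')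
  obtain ⟨T, hT⟩ := eventually_atTop.mp (hev.and (eventually_ge_atTop 1))
  refine ⟨T, fun t ht => ?_⟩
  obtain ⟨hub, ht1⟩ := hT t ht
  have hJpos : 0 < ctasJ C t := ctasJ_pos C hℓ0 hC ht1
  have hx_ub : ctasSp pull C b t / ctasJ C t ≤ wstar b + δ := by
    rw [div_le_iff₀ hJpos]
    have := hub b
    linarith [this]
  have hsumS := ctas_sum_Sp pull C t
  have herase : ∑ b' ∈ Finset.univ.erase b, ctasSp pull C b' t =
      ctasJ C t - ctasSp pull C b t := by
    have h := Finset.sum_erase_add Finset.univ (fun b' => ctasSp pull C b' t)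
      (Finset.mem_univ b)
    linarith [h, hsumS]
  have h3 : ∑ b' ∈ Finset.univ.erase b, wstar b' = 1 - wstar b := by
    have h := Finset.sum_erase_add Finset.univ wstar (Finset.mem_univ b)
    rw [hwstar.2] at h
    linarith
  have h4 : ((Finset.univ.erase b).card : ℝ) = (K:ℝ) - 1 := by
    rw [Finset.card_erase_of_mem (Finset.mem_univ b), Finset.card_univ, Fintype.card_fin]
    have h1 : 1 ≤ K := by omega
    push_cast [h1]
    ring
  have herase_ub : ∑ b' ∈ Finset.univ.erase b, ctasSp pull C b' t ≤
      ctasJ C t * ((1 - wstar b) + ((K:ℝ) - 1) * δ) := by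
    have h1 : ∑ b' ∈ Finset.univ.erase b, ctasSp pull C b' t ≤
        ∑ b' ∈ Finset.univ.erase b, ctasJ C t * (wstar b' + δ) :=
      Finset.sum_le_sum (fun b' _ => hub b')
    have h2 : ∑ b' ∈ Finset.univ.erase b, ctasJ C t * (wstar b' + δ) =
        ctasJ C t * ((∑ b' ∈ Finset.univ.erase b, wstar b') +
          ((Finset.univ.erase b).card : ℝ) * δ) := by
      rw [← Finset.mul_sum, Finset.sum_add_distrib, Finset.sum_const, nsmul_eq_mul]
    rw [h2, h3, h4] at h1
    exact h1
  have hx_lb : wstar b - ((K:ℝ) - 1) * δ ≤ ctasSp pull C b t / ctasJ C t := by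
    rw [le_div_iff₀ hJpos]
    nlinarith [herase, herase_ub]
  rw [Real.dist_eq, abs_lt]
  constructor
  · nlinarith
  · nlinarith

end Final

set_option maxHeartbeats 1000000 in
/-- deterministic content of Theorem 6: under the CTAS
sampling rule (forced exploration of under-sampled arms, otherwise pull the
arm with the largest cost deficit `J(t)·ŵ*_a(t) − ĉ_a(t)·N_a(t)`), if the
plug-in proportions `ŵ*(t)` converge to `w*`, then the empirical proportion
of cumulative cost spent on each arm, `ĉ_a(t)N_a(t)/J(t)`, converges to
`w*_a`. Arm pulls happen at rounds `t ≥ 1` and costs lie in `[ℓ,1]`. -/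
theorem ctas_cost_proportion_convergence
    (K : ℕ) (hK : 2 ≤ K) (ℓ : ℝ) (hℓ : ℓ ∈ Set.Ioc (0 : ℝ) 1)
    (pull : ℕ → Fin K) (C : ℕ → ℝ)
    (hC : ∀ t : ℕ, 1 ≤ t → C t ∈ Set.Icc ℓ 1)
    (what : ℕ → Fin K → ℝ) (wstar : Fin K → ℝ) :
    let N : Fin K → ℕ → ℕ := fun b t => ((Finset.Icc 1 t).filter fun s => pull s = b).card
    let chat : Fin K → ℕ → ℝ := fun b t =>
      (∑ s ∈ (Finset.Icc 1 t).filter fun s => pull s = b, C s) / (N b t : ℝ)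
    let J : ℕ → ℝ := fun t => ∑ s ∈ Finset.Icc 1 t, C s
    (∀ b : Fin K, pull (b.val + 1) = b) →
    (∀ t : ℕ, K ≤ t → (∀ b, 0 ≤ what t b) ∧ ∑ b, what t b = 1) →
    ((∀ b, 0 ≤ wstar b) ∧ ∑ b, wstar b = 1) →
    (∀ t : ℕ, K ≤ t →
      ((∃ b : Fin K, (N b t : ℝ) < Real.sqrt t) →
        ∀ b : Fin K, N (pull (t + 1)) t ≤ N b t) ∧
      ((¬ ∃ b : Fin K, (N b t : ℝ) < Real.sqrt t) →
        ∀ b : Fin K, J t * what t b - chat b t * (N b t : ℝ) ≤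
          J t * what t (pull (t + 1)) - chat (pull (t + 1)) t * (N (pull (t + 1)) t : ℝ))) →
    (∀ b : Fin K, Tendsto (fun t => what t b) atTop (nhds (wstar b))) →
    ∀ b : Fin K,
      Tendsto (fun t => chat b t * (N b t : ℝ) / J t) atTop (nhds (wstar b)) := by
  intro N chat J hinit hwhat hwstar hrule hconv b
  have hchatN : ∀ (b' : Fin K) (t : ℕ), chat b' t * (N b' t : ℝ) = ctasSp pull C b' t := by
    intro b' t
    rcases Nat.eq_zero_or_pos (N b' t) with h | h
    · have hemp : ((Finset.Icc 1 t).filter fun s => pull s = b') = ∅ :=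
        Finset.card_eq_zero.mp h
      simp [chat, N, ctasSp, hemp]
    · have hne : ((N b' t : ℕ) : ℝ) ≠ 0 := by positivity
      exact div_mul_cancel₀ _ hne
  have hJeq : ∀ t : ℕ, J t = ctasJ C t := fun t => rfl
  have hrule' : ∀ t : ℕ, K ≤ t →
      ((∃ b' : Fin K, ((((Finset.Icc 1 t).filter fun s => pull s = b').card : ℕ) : ℝ) <
          Real.sqrt t) →
        ∀ b' : Fin K, ((Finset.Icc 1 t).filter fun s => pull s = pull (t + 1)).card ≤
          ((Finset.Icc 1 t).filter fun s => pull s = b').card) ∧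
      ((¬ ∃ b' : Fin K, ((((Finset.Icc 1 t).filter fun s => pull s = b').card : ℕ) : ℝ) <
          Real.sqrt t) →
        ∀ b' : Fin K, ctasJ C t * what t b' - ctasSp pull C b' t ≤
          ctasJ C t * what t (pull (t + 1)) - ctasSp pull C (pull (t + 1)) t) := by
    intro t ht
    obtain ⟨h1, h2⟩ := hrule t ht
    refine ⟨h1, fun hex b' => ?_⟩
    have h3 := h2 hex b'
    rw [hchatN b' t, hchatN (pull (t + 1)) t] at h3
    exact h3
  have hupper := fun (ε : ℝ) (hε : 0 < ε) (b' : Fin K) =>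
    ctas_key_upper hK hℓ.1 hC what wstar hwhat hwstar hrule' hconv b' ε hε
  have hfin := ctas_final hK hℓ.1 hC wstar hwstar hupper b
  have hfun : (fun t => chat b t * (N b t : ℝ) / J t) =
      fun t => ctasSp pull C b t / ctasJ C t := by
    funext t
    rw [hchatN b t, hJeq t]
  rw [hfun]
  exact hfin
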